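/- The 9×9 matrix of solution 3.1.1, given in block form [1], [[0, a²/c],[c, 1−a²]], [[0,0,a⁴/c²],[0,a,x₃],[c²,x₄,(a+1)(a−1)²]], [[0, a²/c],[c, 1−a²]], [1] with x₃ = a(a²−1)²/x₄, has eigenvalues 1, −a², a³ with multiplicities 5, 3, 1 respectively (assuming a ∉ {0,1,−1}, c ≠ 0, x₄ ≠ 0). -/
import Mathlib


open Matrix Polynomial

noncomputable section

/-- `R̂ ⊗ 1` acting on `V ⊗ V ⊗ V` with `V = ℂ^3`. -/
def R1 (R : Matrix (Fin 3 × Fin 3) (Fin 3 × Fin 3) ℂ) :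
    Matrix (Fin 3 × Fin 3 × Fin 3) (Fin 3 × Fin 3 × Fin 3) ℂ :=
  fun p q => R (p.1, p.2.1) (q.1, q.2.1) * (if p.2.2 = q.2.2 then 1 else 0)

/-- `1 ⊗ R̂` acting on `V ⊗ V ⊗ V` with `V = ℂ^3`. -/
def R2 (R : Matrix (Fin 3 × Fin 3) (Fin 3 × Fin 3) ℂ) :
    Matrix (Fin 3 × Fin 3 × Fin 3) (Fin 3 × Fin 3 × Fin 3) ℂ :=
  fun p q => (if p.1 = q.1 then 1 else 0) * R (p.2.1, p.2.2) (q.2.1, q.2.2)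

/-- The braid relation `R̂₁R̂₂R̂₁ = R̂₂R̂₁R̂₂`. -/
def Braid (R : Matrix (Fin 3 × Fin 3) (Fin 3 × Fin 3) ℂ) : Prop :=
  R1 R * R2 R * R1 R = R2 R * R1 R * R2 R

/-- position within the charge-1 sector: |10⟩, |01⟩. -/
def f1 (p : Fin 3 × Fin 3) : Fin 2 := if p = (1, 0) then 0 else 1

/-- position within the charge-2 sector: |20⟩, |11⟩, |02⟩. -/
def f2 (p : Fin 3 × Fin 3) : Fin 3 := if p = (2, 0) then 0 else if p = (1, 1) then 1 else 2

/-- position within the charge-3 sector: |21⟩, |12⟩. -/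
def f3 (p : Fin 3 × Fin 3) : Fin 2 := if p = (2, 1) then 0 else 1

/-- The 9×9 matrix with blocks of sizes 1,2,3,2,1 on the graded basis
|00⟩,|10⟩,|01⟩,|20⟩,|11⟩,|02⟩,|21⟩,|12⟩,|22⟩. -/
def blockR (b0 : ℂ) (B1 : Matrix (Fin 2) (Fin 2) ℂ) (B2 : Matrix (Fin 3) (Fin 3) ℂ)
    (B3 : Matrix (Fin 2) (Fin 2) ℂ) (b4 : ℂ) : Matrix (Fin 3 × Fin 3) (Fin 3 × Fin 3) ℂ :=
  fun p q =>
    if (p.1 : ℕ) + (p.2 : ℕ) ≠ (q.1 : ℕ) + (q.2 : ℕ) then 0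
    else if (p.1 : ℕ) + (p.2 : ℕ) = 0 then b0
    else if (p.1 : ℕ) + (p.2 : ℕ) = 1 then B1 (f1 p) (f1 q)
    else if (p.1 : ℕ) + (p.2 : ℕ) = 2 then B2 (f2 p) (f2 q)
    else if (p.1 : ℕ) + (p.2 : ℕ) = 3 then B3 (f3 p) (f3 q)
    else b4


/-- Auxiliary: grading order equivalence, forward map. -/
def eTo : Fin 3 × Fin 3 → (Fin 1 ⊕ (Fin 2 ⊕ (Fin 3 ⊕ (Fin 2 ⊕ Fin 1))))
  | (0, 0) => Sum.inl 0
  | (1, 0) => Sum.inr (Sum.inl 0)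
  | (0, 1) => Sum.inr (Sum.inl 1)
  | (2, 0) => Sum.inr (Sum.inr (Sum.inl 0))
  | (1, 1) => Sum.inr (Sum.inr (Sum.inl 1))
  | (0, 2) => Sum.inr (Sum.inr (Sum.inl 2))
  | (2, 1) => Sum.inr (Sum.inr (Sum.inr (Sum.inl 0)))
  | (1, 2) => Sum.inr (Sum.inr (Sum.inr (Sum.inl 1)))
  | (2, 2) => Sum.inr (Sum.inr (Sum.inr (Sum.inr 0)))

/-- Auxiliary: grading order equivalence, inverse map. -/
def eInv : (Fin 1 ⊕ (Fin 2 ⊕ (Fin 3 ⊕ (Fin 2 ⊕ Fin 1)))) → Fin 3 × Fin 3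
  | Sum.inl _ => (0, 0)
  | Sum.inr (Sum.inl 0) => (1, 0)
  | Sum.inr (Sum.inl 1) => (0, 1)
  | Sum.inr (Sum.inr (Sum.inl 0)) => (2, 0)
  | Sum.inr (Sum.inr (Sum.inl 1)) => (1, 1)
  | Sum.inr (Sum.inr (Sum.inl 2)) => (0, 2)
  | Sum.inr (Sum.inr (Sum.inr (Sum.inl 0))) => (2, 1)
  | Sum.inr (Sum.inr (Sum.inr (Sum.inl 1))) => (1, 2)
  | Sum.inr (Sum.inr (Sum.inr (Sum.inr _))) => (2, 2)

/-- The grading-order equivalence. -/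
def eGrade : (Fin 3 × Fin 3) ≃ (Fin 1 ⊕ (Fin 2 ⊕ (Fin 3 ⊕ (Fin 2 ⊕ Fin 1)))) :=
  ⟨eTo, eInv, by decide, by decide⟩

lemma reindex_blockR (b0 : ℂ) (B1 : Matrix (Fin 2) (Fin 2) ℂ) (B2 : Matrix (Fin 3) (Fin 3) ℂ)
    (B3 : Matrix (Fin 2) (Fin 2) ℂ) (b4 : ℂ) :
    reindex eGrade eGrade (blockR b0 B1 B2 B3 b4) =
      fromBlocks !![b0] 0 0 (fromBlocks B1 0 0 (fromBlocks B2 0 0 (fromBlocks B3 0 0 !![b4]))) := by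
  ext i j
  fin_cases i <;> fin_cases j <;>
    simp [eGrade, eInv, blockR, f1, f2, f3, fromBlocks, Prod.ext_iff]

lemma char_one : (!![(1 : ℂ)]).charpoly = X - C 1 := by
  simp [Matrix.charpoly, det_fin_one, charmatrix_apply]

lemma char_two (a c : ℂ) (hc : c ≠ 0) :
    (!![0, a ^ 2 / c; c, 1 - a ^ 2]).charpoly = (X - C 1) * (X + C (a ^ 2)) := by
  have h : C (a ^ 2 / c) * C c = C (a ^ 2) := by
    rw [← C_mul, div_mul_cancel₀ _ hc]
  simp only [map_pow] at h
  rw [Matrix.charpoly, det_fin_two]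
  simp [charmatrix_apply, diagonal]
  linear_combination -h

lemma char_three (a c x4 : ℂ) (hc : c ≠ 0) (hx4 : x4 ≠ 0) :
    (!![0, 0, a ^ 4 / c ^ 2; 0, a, a * (a ^ 2 - 1) ^ 2 / x4;
        c ^ 2, x4, (a + 1) * (a - 1) ^ 2]).charpoly
      = (X - C 1) * (X + C (a ^ 2)) * (X - C (a ^ 3)) := by
  have h1 : C (a ^ 4 / c ^ 2) * C (c ^ 2) = C (a ^ 4) := by
    rw [← C_mul, div_mul_cancel₀ _ (pow_ne_zero 2 hc)]
  have h2 : C (a * (a ^ 2 - 1) ^ 2 / x4) * C x4 = C (a * (a ^ 2 - 1) ^ 2) := by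
    rw [← C_mul, div_mul_cancel₀ _ hx4]
  simp only [map_pow, _root_.map_mul, map_sub, _root_.map_one] at h1 h2
  rw [Matrix.charpoly, det_fin_three]
  simp [charmatrix_apply, diagonal]
  linear_combination (C a - X) * h1 - X * h2

/-- solution 3.1.1 has eigenvalues 1, −a², a³ with multiplicities 5, 3, 1. -/
theorem sol311_charpoly (a c x4 : ℂ) (ha0 : a ≠ 0) (ha1 : a ≠ 1) (ham1 : a ≠ -1)
    (hc : c ≠ 0) (hx4 : x4 ≠ 0) :
    (blockR 1 !![0, a ^ 2 / c; c, 1 - a ^ 2]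
      !![0, 0, a ^ 4 / c ^ 2; 0, a, a * (a ^ 2 - 1) ^ 2 / x4; c ^ 2, x4, (a + 1) * (a - 1) ^ 2]
      !![0, a ^ 2 / c; c, 1 - a ^ 2] 1).charpoly
      = (X - C 1) ^ 5 * (X + C (a ^ 2)) ^ 3 * (X - C (a ^ 3)) := by
  rw [← Matrix.charpoly_reindex eGrade, reindex_blockR]
  simp only [Matrix.charpoly_fromBlocks_zero₂₁]
  rw [char_one, char_two a c hc, char_three a c x4 hc hx4]
  ring
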